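/- In ℝ³ with the p-norm (1 < p < ∞, p ≠ 2), the duality map J* does not map linearly dependent triples to linearly dependent triples: taking a = (0,1,1), b = (1,0,1), c = (1,1,2) in ℓ_q³ (q = p/(p−1)), which are linearly dependent, their images under J*—namely the normalized vectors (0,1,1), (1,0,1), (1,1,2^{q−1})—are linearly independent when q ≠ 2. -/

import Mathlib

/-- The duality map `J* : ℓ_q³ → ℓ_p³`,
`J* a = ‖a‖_q⁻¹ • (|a₁|^{q-2}a₁, |a₂|^{q-2}a₂, |a₃|^{q-2}a₃)`. -/
noncomputable def Jstar (q : ℝ) (a : Fin 3 → ℝ) : Fin 3 → ℝ :=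
  ((∑ i, |a i| ^ q) ^ (1 / q))⁻¹ • fun i => |a i| ^ (q - 2) * a i

/-- For `1 < p < ∞`, `p ≠ 2`, `q = p/(p-1)`, the linearly dependent vectors
`a = (0,1,1)`, `b = (1,0,1)`, `c = (1,1,2)` in `ℓ_q³` have linearly independent images under
`J*`. -/
theorem Jstar_not_preserve_dependence (p q : ℝ) (hp1 : 1 < p) (hp2 : p ≠ 2)
    (hq : q = p / (p - 1)) :
    ¬ LinearIndependent ℝ ![(![0, 1, 1] : Fin 3 → ℝ), ![1, 0, 1], ![1, 1, 2]] ∧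
    LinearIndependent ℝ
      ![Jstar q ![0, 1, 1], Jstar q ![1, 0, 1], Jstar q ![1, 1, 2]] := by
  have hpm : (0:ℝ) < p - 1 := by linarith
  have hq1 : 1 < q := by
    rw [hq, lt_div_iff₀ hpm]; linarith
  have hq0 : q ≠ 0 := by linarith
  have hq2 : q ≠ 2 := by
    intro h
    rw [hq, div_eq_iff (ne_of_gt hpm)] at h
    exact hp2 (by linarith)
  constructor
  · rw [Fintype.not_linearIndependent_iff]
    refine ⟨![1, 1, -1], ?_, ⟨0, by norm_num⟩⟩
    funext i
    fin_cases i <;>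
      simp [Fin.sum_univ_three, Matrix.vecHead, Matrix.vecTail] <;> norm_num
  · -- compute the images
    have habs2 : |(2:ℝ)| = 2 := abs_of_pos (by norm_num)
    have e1 : Jstar q ![0, 1, 1] = (((2:ℝ)) ^ (1/q))⁻¹ • ![0, 1, 1] := by
      unfold Jstar
      congr 1
      · congr 1
        simp [Fin.sum_univ_three, Real.zero_rpow hq0]
        norm_num
      · funext i; fin_cases i <;> simp
    have e2 : Jstar q ![1, 0, 1] = (((2:ℝ)) ^ (1/q))⁻¹ • ![1, 0, 1] := by
      unfold Jstar
      congr 1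
      · congr 1
        simp [Fin.sum_univ_three, Real.zero_rpow hq0]
        norm_num
      · funext i; fin_cases i <;> simp
    have e3 : Jstar q ![1, 1, 2] =
        (((2:ℝ) + 2 ^ q) ^ (1/q))⁻¹ • ![1, 1, (2:ℝ) ^ (q-1)] := by
      unfold Jstar
      congr 1
      · congr 1
        simp [Fin.sum_univ_three, habs2]
        ring
      · funext i
        fin_cases i
        · simp
        · simp
        · simp [habs2]
          rw [← Real.rpow_add_one two_ne_zero]
          ring_nf
    rw [e1, e2, e3]
    set s : ℝ := (((2:ℝ)) ^ (1/q))⁻¹ with hs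
    set t : ℝ := (((2:ℝ) + 2 ^ q) ^ (1/q))⁻¹ with ht
    have hspos : 0 < s := by
      rw [hs]; positivity
    have htpos : 0 < t := by
      rw [ht]
      have : (0:ℝ) < 2 + 2 ^ q := by positivity
      positivity
    have hu : (2:ℝ) ^ (q-1) ≠ 2 := by
      intro h
      have hmono : StrictMono fun y : ℝ => (2:ℝ) ^ y :=
        fun a b hab => (Real.rpow_lt_rpow_left_iff one_lt_two).2 hab
      have hinj := hmono.injective
      have : q - 1 = 1 := by
        apply hinj
        simpa [Real.rpow_one] using h
      exact hq2 (by linarith)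
    have hdet : (Matrix.of ![s • ![0, 1, 1], s • ![1, 0, 1],
        t • ![1, 1, (2:ℝ) ^ (q-1)]]).det = s * s * t * (2 - 2 ^ (q-1)) := by
      simp [Matrix.det_fin_three, Pi.smul_apply, smul_eq_mul]
      ring
    have : LinearIndependent ℝ (fun i =>
        (Matrix.of ![s • ![0, 1, 1], s • ![1, 0, 1], t • ![1, 1, (2:ℝ) ^ (q-1)]]) i) := by
      refine Matrix.linearIndependent_rows_iff_isUnit.2 ?_
      rw [Matrix.isUnit_iff_isUnit_det,
        isUnit_iff_ne_zero, hdet]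
      exact mul_ne_zero (mul_ne_zero (mul_ne_zero hspos.ne' hspos.ne') htpos.ne')
        (sub_ne_zero.2 (Ne.symm hu))
    exact this
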